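/- Let R be a ring in which p is nilpotent and R → R' a faithfully flat homomorphism such that Spec R' → Spec R is a finite product of localizations (a Zariski covering by principal opens). Then W_n(R) → W_n(R') is also a finite product of localizations of W_n(R) covering Spec W_n(R); in particular descent of finite projective modules along W_n(R) → W_n(R') is effective. -/

import Mathlib

open WittVector Function MvPolynomial

section TeichMul

variable {p : ℕ} [hp : Fact p.Prime]

private theorem wv_coeff_mk {R : Type*} [CommRing R] (f : ℕ → R) (i : ℕ) :
    (WittVector.mk p f).coeff i = f i :=
  congrFun (WittVector.coeff_mk p f) i

private theorem wv_map_mk {R S : Type*} [CommRing R] [CommRing S] (f : R →+* S) (F : ℕ → R) :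
    WittVector.map f (WittVector.mk p F) = WittVector.mk p (fun i => f (F i)) := by
  ext i
  rw [WittVector.map_coeff, wv_coeff_mk, wv_coeff_mk]

private theorem teich_mul_aux₁ {R : Type*} [CommRing R] [Invertible (p : R)]
    (a : R) (x : WittVector p R) :
    teichmuller p a * x = WittVector.mk p (fun i => a ^ p ^ i * x.coeff i) := by
  apply (ghostMap.bijective_of_invertible p R).1
  rw [RingHom.map_mul]
  funext k
  rw [Pi.mul_apply, ghostMap_apply, ghostMap_apply, ghostMap_apply,
    ghostComponent_teichmuller, ghostComponent_apply, ghostComponent_apply,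
    aeval_wittPolynomial, aeval_wittPolynomial, Finset.mul_sum]
  refine Finset.sum_congr rfl fun i hi => ?_
  rw [Finset.mem_range, Nat.lt_succ_iff] at hi
  rw [wv_coeff_mk, mul_pow, ← pow_mul]
  have hpow : p ^ i * p ^ (k - i) = p ^ k := by rw [← pow_add, Nat.add_sub_cancel' hi]
  rw [hpow]
  ring

private theorem teich_mul_aux₂ :
    teichmuller p (X (none : Option ℕ) : MvPolynomial (Option ℕ) ℤ) *
        WittVector.mk p (fun i => X (some i)) =
      WittVector.mk p (fun i =>
        (X (none : Option ℕ) : MvPolynomial (Option ℕ) ℤ) ^ p ^ i *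
          (WittVector.mk p (fun j => X (some j))).coeff i) := by
  refine WittVector.map_injective (MvPolynomial.map (Int.castRingHom ℚ))
    (MvPolynomial.map_injective _ Int.cast_injective) ?_
  rw [RingHom.map_mul, map_teichmuller, wv_map_mk, teich_mul_aux₁, wv_map_mk]
  congr 1
  funext i
  simp [wv_coeff_mk]

/-- Multiplication by a Teichmüller lift, coefficientwise. -/
theorem teichmuller_mul_eq {R : Type*} [CommRing R] (a : R) (x : WittVector p R) :
    teichmuller p a * x = WittVector.mk p (fun i => a ^ p ^ i * x.coeff i) := by
  let φ : MvPolynomial (Option ℕ) ℤ →+* R :=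
    (MvPolynomial.aeval (fun o : Option ℕ => o.elim a x.coeff)).toRingHom
  have hX : φ (X none) = a := by simp [φ]
  have hx : WittVector.map φ (WittVector.mk p (fun i => X (some i))) = x := by
    ext i
    rw [WittVector.map_coeff, wv_coeff_mk]
    simp [φ]
  have := congrArg (WittVector.map φ) (teich_mul_aux₂ (p := p))
  rw [RingHom.map_mul, map_teichmuller, hx, hX, wv_map_mk] at this
  rw [this]
  congr 1
  funext i
  rw [map_mul, map_pow, hX, wv_coeff_mk]
  simp [φ]

theorem teichmuller_mul_coeff {R : Type*} [CommRing R] (a : R) (x : WittVector p R) (i : ℕ) :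
    (teichmuller p a * x).coeff i = a ^ p ^ i * x.coeff i := by
  rw [teichmuller_mul_eq, wv_coeff_mk]

end TeichMul

section Nilpotent

variable {p : ℕ} [hp : Fact p.Prime] {R : Type*} [CommRing R]

private theorem versch_pow (y : WittVector p R) (s : ℕ) :
    verschiebung y ^ (s + 1) = verschiebung ((p ^ s : ℕ) • y ^ (s + 1)) := by
  induction s with
  | zero => simp
  | succ s ih =>
    rw [pow_succ, ih, ← verschiebung_mul_frobenius, frobenius_verschiebung]
    congr 1
    simp only [nsmul_eq_mul, Nat.cast_pow]
    ring

private theorem pow_mem_ker_truncate {k : ℕ} (hk : (p : R) ^ k = 0) :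
    ∀ (j : ℕ) (x : WittVector p R), x.coeff 0 = 0 →
      ∃ s : ℕ, 1 ≤ s ∧ x ^ s ∈ RingHom.ker (WittVector.truncate (p := p) (R := R) j) := by
  intro j
  induction j with
  | zero =>
    intro x _
    refine ⟨1, le_refl _, ?_⟩
    rw [RingHom.mem_ker]
    apply TruncatedWittVector.ext
    intro i
    exact i.elim0
  | succ j ih =>
    intro x hx
    set y : WittVector p R := WittVector.mk p (fun i => x.coeff (i + 1)) with hy
    have hxy : x = verschiebung y := by
      ext i
      cases i with
      | zero => rw [verschiebung_coeff_zero, hx]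
      | succ i => rw [verschiebung_coeff_succ, wv_coeff_mk]
    set z : WittVector p R := (p ^ k : ℕ) • y ^ (k + 1) with hz
    have hz0 : z.coeff 0 = 0 := by
      have : z.coeff 0 = WittVector.constantCoeff z := rfl
      rw [this, hz, map_nsmul, nsmul_eq_mul, Nat.cast_pow, hk, zero_mul]
    obtain ⟨s, hs1, hs⟩ := ih z hz0
    obtain ⟨s', rfl⟩ : ∃ s', s = s' + 1 := ⟨s - 1, (Nat.succ_pred_eq_of_pos hs1).symm⟩
    set s := s' + 1
    refine ⟨(k + 1) * s, Nat.succ_le_of_lt (Nat.mul_pos k.succ_pos hs1), ?_⟩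
    have h1 : x ^ (k + 1) = verschiebung z := by rw [hxy, versch_pow, ← hz]
    have hxk : x ^ ((k + 1) * s) = verschiebung ((p ^ s' : ℕ) • z ^ s) := by
      rw [pow_mul, h1, versch_pow]
    rw [hxk, WittVector.mem_ker_truncate]
    have hzs : ∀ i < j, (((p ^ s' : ℕ) • z ^ s)).coeff i = 0 := by
      intro i hi
      have hmem : (p ^ s' : ℕ) • z ^ s ∈
          RingHom.ker (WittVector.truncate (p := p) (R := R) j) := by
        rw [nsmul_eq_mul]
        exact Ideal.mul_mem_left _ _ hs
      rw [WittVector.mem_ker_truncate] at hmem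
      exact hmem i hi
    intro i hi
    cases i with
    | zero => rw [verschiebung_coeff_zero]
    | succ i =>
      rw [verschiebung_coeff_succ]
      exact hzs i (by omega)

theorem truncate_isNilpotent {k : ℕ} (hk : (p : R) ^ k = 0) (n : ℕ)
    (x : WittVector p R) (hx : x.coeff 0 = 0) :
    IsNilpotent (WittVector.truncate n x) := by
  obtain ⟨s, _, hs⟩ := pow_mem_ker_truncate hk n x hx
  exact ⟨s, by rw [← map_pow]; exact RingHom.mem_ker.mp hs⟩

end Nilpotent

section TruncMap

variable {p : ℕ} [hp : Fact p.Prime]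

/-- The ring homomorphism `W_n(R) → W_n(S)` induced by `f : R → S`. -/
noncomputable def truncatedWittVectorMap (p : ℕ) [Fact p.Prime] (n : ℕ)
    {R S : Type*} [CommRing R] [CommRing S] (f : R →+* S) :
    TruncatedWittVector p n R →+* TruncatedWittVector p n S :=
  RingHom.liftOfRightInverse (WittVector.truncate n) TruncatedWittVector.out
    TruncatedWittVector.truncateFun_out
    ⟨(WittVector.truncate n).comp (WittVector.map f), by
      intro x hx
      rw [WittVector.mem_ker_truncate] at hx
      rw [RingHom.mem_ker, RingHom.comp_apply, ← RingHom.mem_ker,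
        WittVector.mem_ker_truncate]
      intro i hi
      rw [WittVector.map_coeff, hx i hi, map_zero]⟩

theorem truncatedWittVectorMap_truncate {n : ℕ} {R S : Type*} [CommRing R] [CommRing S]
    (f : R →+* S) (x : WittVector p R) :
    truncatedWittVectorMap p n f (WittVector.truncate n x) =
      WittVector.truncate n (WittVector.map f x) :=
  RingHom.liftOfRightInverse_comp_apply _ _ _ _ x

theorem truncate_out' {n : ℕ} {R : Type*} [CommRing R] (x : TruncatedWittVector p n R) :
    WittVector.truncate n x.out = x :=
  TruncatedWittVector.truncateFun_out x

end TruncMap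

section Main

/-- Let `R` be a ring in which `p` is nilpotent, and let `Spec R` be covered by the principal
opens attached to `g₁, …, g_m ∈ R`.  Then for each `i` the ring `W_n((R_{gᵢ}))` is the
localization of `W_n(R)` away from the Teichmüller lift `[gᵢ]`, and the Teichmüller lifts
`[g₁], …, [g_m]` generate the unit ideal of `W_n(R)`; i.e. `W_n(R) → ∏ᵢ W_n(R_{gᵢ})` is again
a finite covering of `Spec W_n(R)` by localizations. -/
theorem truncatedWittVector_localization_cover (p : ℕ) [Fact p.Prime] (n : ℕ)
    (R : Type) [CommRing R] (hpnil : ∃ k : ℕ, (p : R) ^ k = 0)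
    (m : ℕ) (g : Fin m → R) (hcov : Ideal.span (Set.range g) = ⊤) :
    (∀ i : Fin m,
      letI : Algebra (TruncatedWittVector p n R)
          (TruncatedWittVector p n (Localization.Away (g i))) :=
        (truncatedWittVectorMap p n (algebraMap R (Localization.Away (g i)))).toAlgebra
      IsLocalization.Away (WittVector.truncate n (WittVector.teichmuller p (g i)))
        (TruncatedWittVector p n (Localization.Away (g i)))) ∧
    Ideal.span (Set.range fun i : Fin m =>
      WittVector.truncate n (WittVector.teichmuller p (g i))) = ⊤ := by
  have hp : Fact p.Prime := inferInstance
  constructor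
  · -- localization statement
    intro i
    set G := g i with hG
    set S := Localization.Away G with hS
    letI : Algebra (TruncatedWittVector p n R) (TruncatedWittVector p n S) :=
      (truncatedWittVectorMap p n (algebraMap R S)).toAlgebra
    set φ : R →+* S := algebraMap R S with hφ
    have halg : algebraMap (TruncatedWittVector p n R) (TruncatedWittVector p n S) =
        truncatedWittVectorMap p n φ := rfl
    set t : TruncatedWittVector p n R :=
      WittVector.truncate n (WittVector.teichmuller p G) with ht
    have hAt : truncatedWittVectorMap p n φ t =
        WittVector.truncate n (WittVector.teichmuller p (φ G)) := by
      rw [ht, truncatedWittVectorMap_truncate, WittVector.map_teichmuller]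
    refine ⟨?_, ?_, ?_⟩
    · -- map_units
      rintro ⟨y, ky, rfl⟩
      rw [halg, map_pow, hAt]
      exact (((IsLocalization.Away.algebraMap_isUnit (S := S) G).map
        (WittVector.teichmuller p)).map (WittVector.truncate n)).pow ky
    · -- surjectivity
      intro z
      set w : WittVector p S := z.out with hw
      have key : ∀ j : ℕ, ∃ (a : R) (e : ℕ), w.coeff j * φ (G ^ e) = φ a := by
        intro j
        obtain ⟨⟨a, s⟩, hs⟩ := IsLocalization.surj (M := Submonoid.powers G) (w.coeff j)
        obtain ⟨e, he⟩ := (Submonoid.mem_powers_iff _ _).mp s.2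
        exact ⟨a, e, by rw [he]; exact hs⟩
      choose a e hae using key
      set N : ℕ := (Finset.range n).sup e with hN
      have heN : ∀ j < n, e j ≤ N * p ^ j := by
        intro j hj
        calc e j ≤ N := Finset.le_sup (Finset.mem_range.mpr hj)
        _ = N * 1 := (mul_one N).symm
        _ ≤ N * p ^ j := Nat.mul_le_mul_left N (Nat.one_le_pow _ _ hp.out.pos)
      refine ⟨⟨WittVector.truncate n (WittVector.mk p (fun j => G ^ (N * p ^ j - e j) * a j)),
        ⟨t ^ N, ⟨N, rfl⟩⟩⟩, ?_⟩
      rw [halg]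
      show z * truncatedWittVectorMap p n φ (t ^ N) = _
      rw [map_pow, hAt, truncatedWittVectorMap_truncate]
      have hz : z = WittVector.truncate n w := (truncate_out' z).symm
      rw [hz, ← map_pow, ← RingHom.map_mul]
      apply TruncatedWittVector.ext
      intro j
      rw [WittVector.coeff_truncate, WittVector.coeff_truncate]
      have hcomm : w * WittVector.teichmuller p (φ G) ^ N =
          WittVector.teichmuller p ((φ G) ^ N) * w := by
        rw [mul_comm, ← MonoidHom.map_pow]
      rw [hcomm, teichmuller_mul_coeff, WittVector.map_coeff, wv_coeff_mk]
      have hsub : N * p ^ (j : ℕ) - e (j : ℕ) + e (j : ℕ) = N * p ^ (j : ℕ) :=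
        Nat.sub_add_cancel (heN j j.2)
      calc ((φ G) ^ N) ^ p ^ (j : ℕ) * w.coeff j
          = φ G ^ (N * p ^ (j : ℕ) - e (j : ℕ)) * (w.coeff (j : ℕ) * φ (G ^ e (j : ℕ))) := by
            rw [map_pow, ← pow_mul]
            conv_lhs => rw [← hsub, pow_add]
            ring
        _ = φ G ^ (N * p ^ (j : ℕ) - e (j : ℕ)) * φ (a (j : ℕ)) := by rw [hae]
        _ = φ (G ^ (N * p ^ (j : ℕ) - e (j : ℕ)) * a (j : ℕ)) := by rw [map_mul, map_pow]
    · -- exists_of_eq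
      intro x y hxy
      rw [halg] at hxy
      have hcoeff : ∀ j : Fin n, φ (x.coeff j) = φ (y.coeff j) := by
        intro j
        have hx' : truncatedWittVectorMap p n φ x =
            WittVector.truncate n (WittVector.map φ x.out) := by
          rw [← truncatedWittVectorMap_truncate, truncate_out']
        have hy' : truncatedWittVectorMap p n φ y =
            WittVector.truncate n (WittVector.map φ y.out) := by
          rw [← truncatedWittVectorMap_truncate, truncate_out']
        have h := congrArg (fun v => TruncatedWittVector.coeff j v) hxy
        simp only [hx', hy', WittVector.coeff_truncate, WittVector.map_coeff,
          TruncatedWittVector.coeff_out] at h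
        exact h
      have key : ∀ j : Fin n, ∃ e : ℕ, G ^ e * x.coeff j = G ^ e * y.coeff j := by
        intro j
        obtain ⟨c, hc⟩ := IsLocalization.exists_of_eq (M := Submonoid.powers G) (hcoeff j)
        obtain ⟨e, he⟩ := (Submonoid.mem_powers_iff _ _).mp c.2
        exact ⟨e, by rw [he]; exact hc⟩
      choose e he using key
      set N : ℕ := Finset.univ.sup e with hN
      have ht' : t ^ N = WittVector.truncate n (WittVector.teichmuller p (G ^ N)) := by
        rw [ht, ← RingHom.map_pow, ← MonoidHom.map_pow]
      have hmul : ∀ (u : TruncatedWittVector p n R) (j : Fin n),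
          (t ^ N * u).coeff j = G ^ (N * p ^ (j : ℕ)) * u.coeff j := by
        intro u j
        rw [ht', ← truncate_out' u, ← RingHom.map_mul, WittVector.coeff_truncate,
          WittVector.coeff_truncate, teichmuller_mul_coeff, ← pow_mul]
      refine ⟨⟨t ^ N, ⟨N, rfl⟩⟩, ?_⟩
      show t ^ N * x = t ^ N * y
      apply TruncatedWittVector.ext
      intro j
      rw [hmul, hmul]
      have hj : e j ≤ N * p ^ (j : ℕ) := by
        calc e j ≤ N := Finset.le_sup (Finset.mem_univ j)
        _ = N * 1 := (mul_one N).symm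
        _ ≤ N * p ^ (j : ℕ) := Nat.mul_le_mul_left N (Nat.one_le_pow _ _ hp.out.pos)
      rw [← Nat.sub_add_cancel hj, pow_add, mul_assoc, mul_assoc, he j]
  · -- the Teichmüller lifts generate the unit ideal
    obtain ⟨k, hk⟩ := hpnil
    have h1 : (1 : R) ∈ Ideal.span (Set.range g) := hcov ▸ Submodule.mem_top
    rw [Ideal.span, Submodule.mem_span_range_iff_exists_fun] at h1
    obtain ⟨c, hc⟩ := h1
    set u : WittVector p R := ∑ j, WittVector.teichmuller p (c j) *
      WittVector.teichmuller p (g j) with hu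
    have hu0 : ((1 : WittVector p R) - u).coeff 0 = 0 := by
      have : ((1 : WittVector p R) - u).coeff 0 = WittVector.constantCoeff (1 - u) := rfl
      rw [this, map_sub, map_one, hu, map_sum]
      have : ∀ j : Fin m, WittVector.constantCoeff
          (WittVector.teichmuller p (c j) * WittVector.teichmuller p (g j)) = c j * g j := by
        intro j
        rw [map_mul]
        show (WittVector.teichmuller p (c j)).coeff 0 *
          (WittVector.teichmuller p (g j)).coeff 0 = _
        rw [WittVector.teichmuller_coeff_zero, WittVector.teichmuller_coeff_zero]
      rw [Finset.sum_congr rfl (fun j _ => this j)]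
      simp only [smul_eq_mul] at hc
      rw [hc, sub_self]
    have hnil : IsNilpotent (WittVector.truncate n ((1 : WittVector p R) - u)) :=
      truncate_isNilpotent hk n _ hu0
    rw [map_sub, map_one] at hnil
    have hunit : IsUnit (WittVector.truncate n u) := by
      have := hnil.isUnit_one_sub
      rwa [sub_sub_cancel] at this
    have hmem : WittVector.truncate n u ∈ Ideal.span (Set.range fun i : Fin m =>
        WittVector.truncate n (WittVector.teichmuller p (g i))) := by
      rw [hu, map_sum]
      refine Ideal.sum_mem _ fun j _ => ?_
      rw [RingHom.map_mul]
      exact Ideal.mul_mem_left _ _ (Ideal.subset_span ⟨j, rfl⟩)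
    exact Ideal.eq_top_of_isUnit_mem _ hmem hunit

end Main
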